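/- For fixed blocklength n ≥ 1 and rate R > 0, the normal-approximation error probability ε(γ) = Q((log(1+γ) − R)·√(n / (1 − (1+γ)^{−2}))) is strictly decreasing in γ on (0,∞). -/

import Mathlib

open Real MeasureTheory

noncomputable def gaussQ (x : ℝ) : ℝ :=
  (1 / Real.sqrt (2 * Real.pi)) * ∫ t in Set.Ioi x, Real.exp (-t ^ 2 / 2)

lemma integrable_gauss : Integrable (fun t : ℝ => Real.exp (-t ^ 2 / 2)) := by
  have := integrable_exp_neg_mul_sq (b := (1/2 : ℝ)) (by norm_num)
  convert this using 2 with t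
  ring_nf

lemma gaussQ_strictAnti : StrictAnti gaussQ := by
  intro x y hxy
  unfold gaussQ
  have hc : 0 < 1 / Real.sqrt (2 * Real.pi) := by positivity
  apply mul_lt_mul_of_pos_left _ hc
  have hsplit : (∫ t in Set.Ioi x, Real.exp (-t ^ 2 / 2)) =
      (∫ t in Set.Ioc x y, Real.exp (-t ^ 2 / 2)) +
      (∫ t in Set.Ioi y, Real.exp (-t ^ 2 / 2)) := by
    rw [← MeasureTheory.setIntegral_union (Set.Ioc_disjoint_Ioi le_rfl)
      measurableSet_Ioi integrable_gauss.integrableOn integrable_gauss.integrableOn,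
      Set.Ioc_union_Ioi_eq_Ioi hxy.le]
  rw [hsplit]
  have hpos : 0 < ∫ t in Set.Ioc x y, Real.exp (-t ^ 2 / 2) := by
    rw [← intervalIntegral.integral_of_le hxy.le]
    exact intervalIntegral.intervalIntegral_pos_of_pos
      integrable_gauss.intervalIntegrable (fun t => Real.exp_pos _) hxy
  linarith
lemma arg_deriv_pos (n : ℕ) (hn : 1 ≤ n) (R γ : ℝ) (hR : 0 < R) (hγ : 0 < γ) :
    ∃ d, 0 < d ∧ HasDerivAt (fun γ : ℝ => (Real.log (1 + γ) - R) *
      Real.sqrt ((n : ℝ) / (1 - 1 / (1 + γ) ^ 2))) d γ := by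
  have hu : (1:ℝ) < 1 + γ := by linarith
  have hu0 : (0:ℝ) < 1 + γ := by linarith
  have hV : (0:ℝ) < 1 - 1 / (1 + γ) ^ 2 := by
    have h2 : (1:ℝ) < (1+γ)^2 := by nlinarith
    have : 1 / (1+γ)^2 < 1 := by
      rw [div_lt_one (by positivity)]; exact h2
    linarith
  have hnpos : (0:ℝ) < n := by exact_mod_cast hn
  have h1 : HasDerivAt (fun γ : ℝ => 1 + γ) 1 γ := (hasDerivAt_id γ).const_add 1
  have h2 : HasDerivAt (fun γ : ℝ => (1 + γ) ^ 2) (2 * (1+γ)) γ := by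
    have := h1.pow 2
    simpa [Pi.pow_def] using this
  have h3 : HasDerivAt (fun γ : ℝ => 1 / (1 + γ) ^ 2)
      (-(2 * (1+γ)) / ((1+γ)^2)^2) γ := by
    have := h2.inv (by positivity)
    simpa [one_div, Pi.inv_def, Pi.pow_def] using this
  have h4 : HasDerivAt (fun γ : ℝ => 1 - 1 / (1 + γ) ^ 2)
      (-(-(2 * (1+γ)) / ((1+γ)^2)^2)) γ := h3.const_sub 1
  have h5 : HasDerivAt (fun γ : ℝ => (n:ℝ) / (1 - 1 / (1 + γ) ^ 2))
      ((n:ℝ) * (-(2 * (1+γ)) / ((1+γ)^2)^2) / (1 - 1 / (1 + γ) ^ 2)^2) γ := by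
    have := (hasDerivAt_const γ (n:ℝ)).div h4 hV.ne'
    simpa [Pi.div_def] using this
  have h6 := h5.sqrt (by positivity)
  have h7 : HasDerivAt (fun γ : ℝ => Real.log (1 + γ) - R) (1 / (1+γ)) γ := by
    simpa using (h1.log hu0.ne').sub_const R
  refine ⟨_, ?_, h7.mul h6⟩
  set u := 1 + γ with hudef
  set V := 1 - 1 / u ^ 2 with hVdef
  set L := Real.log u - R with hLdef
  set s := Real.sqrt ((n:ℝ) / V) with hsdef
  have hs : 0 < s := Real.sqrt_pos.mpr (by positivity)
  have hs2 : s ^ 2 = (n:ℝ) / V := Real.sq_sqrt (by positivity)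
  have hn2 : (n:ℝ) = s ^ 2 * V := by rw [hs2]; field_simp
  have hLlt : L < u ^ 2 - 1 := by
    have hlog : Real.log u < u - 1 := Real.log_lt_sub_one_of_pos hu0 (by linarith)
    have h' : u - 1 < u ^ 2 - 1 := by nlinarith
    have : L < Real.log u := by rw [hLdef]; linarith
    linarith
  have hV2 : u ^ 2 * V = u ^ 2 - 1 := by
    rw [hVdef]; field_simp
  clear h1 h2 h3 h4 h5 h6 h7 hudef hVdef hLdef hsdef
  clear_value u V L s
  have hd : 1 / u * s + L * ((n:ℝ) * (-(2 * u) / (u^2)^2) / V^2 / (2 * s)) =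
      (n:ℝ) * (u^2 - 1 - L) / (s * u^3 * V^2) := by
    rw [hn2]
    field_simp
    linear_combination hV2
  rw [hd]
  have hnum : 0 < (n:ℝ) * (u^2 - 1 - L) := by
    apply mul_pos hnpos; linarith
  positivity

lemma arg_strictMono (n : ℕ) (hn : 1 ≤ n) (R : ℝ) (hR : 0 < R) :
    StrictMonoOn (fun γ : ℝ => (Real.log (1 + γ) - R) *
      Real.sqrt ((n : ℝ) / (1 - 1 / (1 + γ) ^ 2))) (Set.Ioi (0 : ℝ)) := by
  apply strictMonoOn_of_deriv_pos (convex_Ioi 0)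
  · intro x hx
    exact (arg_deriv_pos n hn R x hR hx).choose_spec.2.continuousAt.continuousWithinAt
  · intro x hx
    rw [interior_Ioi] at hx
    obtain ⟨d, hd, hdd⟩ := arg_deriv_pos n hn R x hR hx
    rw [hdd.deriv]; exact hd

theorem normal_approx_error_strictly_decreasing
    (n : ℕ) (hn : 1 ≤ n) (R : ℝ) (hR : 0 < R) :
    StrictAntiOn
      (fun γ : ℝ => gaussQ ((Real.log (1 + γ) - R) *
        Real.sqrt ((n : ℝ) / (1 - 1 / (1 + γ) ^ 2))))
      (Set.Ioi (0 : ℝ)) := by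
  intro a ha b hb hab
  exact gaussQ_strictAnti (arg_strictMono n hn R hR ha hb hab)
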